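/- Burning algorithm: let β ∈ ℕ^{V₀} be given by β_j = e_{j,s}. For any stable configuration u, in any toppling sequence stabilizing u + β each vertex of V₀ topples at most once, and u is recurrent if and only if every vertex of V₀ topples exactly once in the stabilization of u + β; equivalently, u is recurrent if and only if σ(u + β) = u. -/

import Mathlib

namespace SandpilePaper

variable {V : Type*} [Fintype V] [DecidableEq V]

/-- Configurations: assignments of numbers of grains to ordinary (non-sink) vertices. -/
abbrev Conf (s : V) : Type _ := {i : V // i ≠ s} → ℕ

/-- The degree of a vertex: `deg i = ∑ j, e i j`. -/
def deg (e : V → V → ℕ) (i : V) : ℕ := ∑ j, e i j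

/-- Toppling the (unstable) vertex `i`. -/
def toppleAt (e : V → V → ℕ) (s : V) (i : {i : V // i ≠ s}) (u : Conf s) : Conf s :=
  fun j => if j = i then u i - deg e i.1 + e i.1 i.1 else u j + e i.1 j.1

/-- One toppling step: some unstable vertex topples. -/
def Topple (e : V → V → ℕ) (s : V) (u v : Conf s) : Prop :=
  ∃ i : {i : V // i ≠ s}, deg e i.1 ≤ u i ∧ v = toppleAt e s i u

/-- A configuration is stable if every ordinary vertex has fewer grains than its degree. -/
def Stable (e : V → V → ℕ) (s : V) (u : Conf s) : Prop :=
  ∀ j : {i : V // i ≠ s}, u j < deg e j.1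

/-- The underlying simple graph: edges between distinct vertices with positive multiplicity. -/
def graph (e : V → V → ℕ) : SimpleGraph V := SimpleGraph.fromRel fun i j => 0 < e i j

/-- `σ` is a stabilization map: `σ u` is stable and reached from `u` by finitely many topplings. -/
def IsStabilization (e : V → V → ℕ) (s : V) (σ : Conf s → Conf s) : Prop :=
  ∀ u, Stable e s (σ u) ∧ Relation.ReflTransGen (Topple e s) u (σ u)

/-- A stable configuration `u` is recurrent if every configuration can reach it. -/
def Recurrent (e : V → V → ℕ) (s : V) (σ : Conf s → Conf s) (u : Conf s) : Prop :=
  Stable e s u ∧ ∀ v : Conf s, ∃ w : Conf s, σ (v + w) = u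

/-- Apply a sequence of topplings. -/
def applySeq (e : V → V → ℕ) (s : V) (u : Conf s) : List {i : V // i ≠ s} → Conf s
  | [] => u
  | i :: L => applySeq e s (toppleAt e s i u) L

/-- A toppling sequence is valid if each toppled vertex is unstable when toppled. -/
def ValidSeq (e : V → V → ℕ) (s : V) (u : Conf s) : List {i : V // i ≠ s} → Prop
  | [] => True
  | i :: L => deg e i.1 ≤ u i ∧ ValidSeq e s (toppleAt e s i u) L

/-- `succeq e s i j` means `i ⪰ j`: `j` lies on the unique path from `i` to the sink `s`. -/
def succeq (e : V → V → ℕ) (s i j : V) : Prop :=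
  (graph e).dist i s = (graph e).dist i j + (graph e).dist j s

noncomputable instance (e : V → V → ℕ) (s i j : V) : Decidable (succeq e s i j) := Nat.decEq _ _

/-- `p` assigns to each ordinary vertex its parent: its neighbor on the path to the sink. -/
def IsParent (e : V → V → ℕ) (s : V) (p : {i : V // i ≠ s} → V) : Prop :=
  ∀ j : {i : V // i ≠ s}, (graph e).Adj j.1 (p j) ∧
    (graph e).dist (p j) s + 1 = (graph e).dist j.1 s

/-- The set `{i : i ⪰ j}`. -/
noncomputable def descendants (e : V → V → ℕ) (s : V) (j : {i : V // i ≠ s}) :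
    Finset {i : V // i ≠ s} :=
  Finset.univ.filter fun i => succeq e s i.1 j.1

/-- The set `{i : i ≻ j}`. -/
noncomputable def strictDescendants (e : V → V → ℕ) (s : V) (j : {i : V // i ≠ s}) :
    Finset {i : V // i ≠ s} :=
  Finset.univ.filter fun i => i ≠ j ∧ succeq e s i.1 j.1

/-- `j` is a leaf: its parent is its only neighbor in the underlying tree. -/
def IsLeaf (e : V → V → ℕ) (s : V) (p : {i : V // i ≠ s} → V) (j : {i : V // i ≠ s}) : Prop :=
  ∀ k : V, (graph e).Adj j.1 k → k = p j

/-- Rows of the toppling matrix `Δ`. -/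
def deltaRow (e : V → V → ℕ) (s : V) (i j : {i : V // i ≠ s}) : ℤ :=
  if i = j then (deg e i.1 : ℤ) - (e i.1 i.1 : ℤ) else -(e i.1 j.1 : ℤ)

/-- The lattice `Λ` spanned by the rows of the toppling matrix. -/
def lattice (e : V → V → ℕ) (s : V) : AddSubgroup ({i : V // i ≠ s} → ℤ) :=
  AddSubgroup.closure (Set.range (deltaRow e s))

/-- The map `φ(u)_j = ∑_{i ⪰ j} u_i (mod e_{j,p(j)})`. -/
noncomputable def phi (e : V → V → ℕ) (s : V) (p : {i : V // i ≠ s} → V) (u : Conf s)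
    (j : {i : V // i ≠ s}) : ZMod (e j.1 (p j)) :=
  ∑ i ∈ descendants e s j, (u i : ZMod (e j.1 (p j)))

/-- The map `φ` on integer vectors. -/
noncomputable def phiZ (e : V → V → ℕ) (s : V) (p : {i : V // i ≠ s} → V) (u : {i : V // i ≠ s} → ℤ)
    (j : {i : V // i ≠ s}) : ZMod (e j.1 (p j)) :=
  ∑ i ∈ descendants e s j, (u i : ZMod (e j.1 (p j)))



/-- Split a list at the first element satisfying `p`. -/
theorem aux_first_split {α : Type*} (p : α → Prop) [DecidablePred p] :
    ∀ (l : List α), (∃ x ∈ l, p x) →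
      ∃ Q₁ j Q₂, l = Q₁ ++ j :: Q₂ ∧ p j ∧ ∀ x ∈ Q₁, ¬ p x := by
  intro l
  induction l with
  | nil => rintro ⟨x, hx, _⟩; cases hx
  | cons a l ih =>
    intro hex
    by_cases hpa : p a
    · exact ⟨[], a, l, rfl, hpa, by simp⟩
    · have hex' : ∃ x ∈ l, p x := by
        obtain ⟨x, hx, hpx⟩ := hex
        rcases List.mem_cons.1 hx with rfl | hx
        · exact absurd hpx hpa
        · exact ⟨x, hx, hpx⟩
      obtain ⟨Q₁, j, Q₂, h1, h2, h3⟩ := ih hex'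
      refine ⟨a :: Q₁, j, Q₂, by rw [h1]; rfl, h2, ?_⟩
      intro x hx
      rcases List.mem_cons.1 hx with rfl | hx
      · exact hpa
      · exact h3 x hx

/-- Split a list at the last occurrence of `j`. -/
theorem aux_last_split {α : Type*} [DecidableEq α] :
    ∀ (l : List α) (j : α), j ∈ l → ∃ L₁ L₂, l = L₁ ++ j :: L₂ ∧ j ∉ L₂ := by
  intro l
  induction l with
  | nil => intro j h; cases h
  | cons a l ih =>
    intro j h
    by_cases hj : j ∈ l
    · obtain ⟨L₁, L₂, h1, h2⟩ := ih j hj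
      exact ⟨a :: L₁, L₂, by rw [h1]; rfl, h2⟩
    · have : j = a := by
        rcases List.mem_cons.1 h with rfl | h
        · rfl
        · exact absurd h hj
      subst this
      exact ⟨[], l, rfl, hj⟩

theorem aux_dedup_split {α : Type*} [DecidableEq α] :
    ∀ (L₁ : List α) (j : α) (L₂ : List α), j ∉ L₂ →
      ∃ W, (L₁ ++ j :: L₂).dedup = W ++ j :: L₂.dedup := by
  intro L₁
  induction L₁ with
  | nil => intro j L₂ h; exact ⟨[], by simp [List.dedup_cons_of_notMem h]⟩
  | cons a L₁ ih =>
    intro j L₂ h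
    obtain ⟨W, hW⟩ := ih j L₂ h
    by_cases ha : a ∈ L₁ ++ j :: L₂
    · exact ⟨W, by rw [List.cons_append, List.dedup_cons_of_mem ha, hW]⟩
    · exact ⟨a :: W, by rw [List.cons_append, List.dedup_cons_of_notMem ha, hW]; rfl⟩

theorem aux_split_unique {α : Type*} :
    ∀ (A : List α) {j : α} {B : List α} (C : List α) {D : List α},
      A ++ j :: B = C ++ j :: D → j ∉ A → j ∉ C → A = C ∧ B = D := by
  intro A
  induction A with
  | nil =>
    intro j B C D h hA hC
    cases C with
    | nil => simpa using h
    | cons c C' =>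
      simp only [List.nil_append, List.cons_append, List.cons.injEq] at h
      exact absurd (h.1 ▸ (List.mem_cons_self : c ∈ c :: C')) hC
  | cons a A' ih =>
    intro j B C D h hA hC
    cases C with
    | nil =>
      simp only [List.cons_append, List.nil_append, List.cons.injEq] at h
      exact absurd (h.1.symm ▸ (List.mem_cons_self : a ∈ a :: A')) hA
    | cons c C' =>
      simp only [List.cons_append, List.cons.injEq] at h
      have hA' : j ∉ A' := fun hm => hA (List.mem_cons_of_mem a hm)
      have hC' : j ∉ C' := fun hm => hC (List.mem_cons_of_mem c hm)
      obtain ⟨h1, h2⟩ := ih C' h.2 hA' hC'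
      exact ⟨by rw [h.1, h1], h2⟩

theorem aux_dedup_sum_le {α : Type*} [DecidableEq α] (f : α → ℕ) :
    ∀ (l : List α), (l.dedup.map f).sum ≤ (l.map f).sum := by
  intro l
  induction l with
  | nil => simp
  | cons a l ih =>
    by_cases ha : a ∈ l
    · rw [List.dedup_cons_of_mem ha]
      simp only [List.map_cons, List.sum_cons]
      omega
    · rw [List.dedup_cons_of_notMem ha]
      simp only [List.map_cons, List.sum_cons]
      omega

theorem aux_sum_univ {α : Type*} [Fintype α] [DecidableEq α] (f : α → ℕ) (l : List α)
    (hn : l.Nodup) (ha : ∀ i, i ∈ l) : (l.map f).sum = ∑ i, f i := by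
  rw [← List.sum_toFinset f hn]
  congr 1
  ext x
  simp [ha]

theorem aux_sum_le_univ {α : Type*} [Fintype α] [DecidableEq α] (f : α → ℕ) (l : List α)
    (hn : l.Nodup) : (l.map f).sum ≤ ∑ i, f i := by
  rw [← List.sum_toFinset f hn]
  exact Finset.sum_le_sum_of_subset (Finset.subset_univ _)

theorem aux_sum_le_filter {α : Type*} [Fintype α] [DecidableEq α] (f : α → ℕ) (p : α → Prop)
    [DecidablePred p] (l : List α) (hn : l.Nodup) (hp : ∀ x ∈ l, p x) :
    (l.map f).sum ≤ ∑ i ∈ Finset.univ.filter p, f i := by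
  rw [← List.sum_toFinset f hn]
  apply Finset.sum_le_sum_of_subset
  intro x hx
  simp only [List.mem_toFinset] at hx
  simp only [Finset.mem_filter, Finset.mem_univ, true_and]
  exact hp x hx

theorem aux_sum_count {α : Type*} [Fintype α] [DecidableEq α] (f : α → ℕ) :
    ∀ (l : List α), (l.map f).sum = ∑ i, l.count i * f i := by
  intro l
  induction l with
  | nil => simp
  | cons a l ih =>
    simp only [List.map_cons, List.sum_cons, ih]
    have h1 : ∀ i : α, ((a :: l).count i) * f i = l.count i * f i + (if i = a then f i else 0) := by
      intro i
      by_cases h : i = a <;> simp [List.count_cons, h, Nat.add_mul] <;> exact fun h' => absurd h'.symm h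
    rw [Finset.sum_congr rfl fun i _ => h1 i, Finset.sum_add_distrib]
    have h2 : ∑ i, (if i = a then f i else 0) = f a := by
      rw [Finset.sum_ite_eq' Finset.univ a f]
      simp
    omega

section Core

variable {V : Type*} [Fintype V] [DecidableEq V]
variable (e : V → V → ℕ) (s : V)

theorem applySeq_append : ∀ (A B : List {i : V // i ≠ s}) (v : Conf s),
    applySeq e s v (A ++ B) = applySeq e s (applySeq e s v A) B := by
  intro A
  induction A with
  | nil => intro B v; rfl
  | cons a A ih => intro B v; exact ih B (toppleAt e s a v)

theorem validSeq_append : ∀ (A B : List {i : V // i ≠ s}) (v : Conf s),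
    ValidSeq e s v (A ++ B) ↔ ValidSeq e s v A ∧ ValidSeq e s (applySeq e s v A) B := by
  intro A
  induction A with
  | nil => intro B v; simp [ValidSeq, applySeq]
  | cons a A ih =>
    intro B v
    show (deg e a.1 ≤ v a ∧ ValidSeq e s (toppleAt e s a v) (A ++ B)) ↔ _
    rw [ih B (toppleAt e s a v)]
    show _ ↔ (deg e a.1 ≤ v a ∧ ValidSeq e s (toppleAt e s a v) A) ∧ _
    tauto

theorem applySeq_value : ∀ (L : List {i : V // i ≠ s}) (v : Conf s), ValidSeq e s v L →
    ∀ j : {i : V // i ≠ s}, applySeq e s v L j + (L.count j) * deg e j.1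
      = v j + (L.map fun i => e i.1 j.1).sum := by
  intro L
  induction L with
  | nil => intro v _ j; simp [applySeq]
  | cons i L ih =>
    intro v hv j
    obtain ⟨hdeg, hv'⟩ := hv
    have H := ih (toppleAt e s i v) hv' j
    show applySeq e s (toppleAt e s i v) L j + _ = _
    simp only [List.map_cons, List.sum_cons]
    by_cases hji : j = i
    · subst hji
      have hc : List.count j (j :: L) = List.count j L + 1 := List.count_cons_self
      have ht : toppleAt e s j v j = v j - deg e j.1 + e j.1 j.1 := by simp [toppleAt]
      rw [ht] at H
      rw [hc, Nat.add_mul, Nat.one_mul]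
      omega
    · have hc : List.count j (i :: L) = List.count j L := List.count_cons_of_ne (Ne.symm hji)
      have ht : toppleAt e s i v j = v j + e i.1 j.1 := by simp [toppleAt, hji]
      rw [ht] at H
      rw [hc]
      omega

theorem validSeq_nil (v : Conf s) : ValidSeq e s v [] := trivial

theorem deg_split (hsym : ∀ i j, e i j = e j i) (j : V) :
    deg e j = e j s + ∑ i : {i : V // i ≠ s}, e i.1 j := by
  have h1 : deg e j = ∑ k, e k j := Finset.sum_congr rfl fun k _ => hsym j k
  have h2 : ∑ x ∈ ({s}ᶜ : Finset V), e x j = ∑ x : {i : V // i ≠ s}, e x.1 j := by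
    rw [Finset.sum_subtype]
    intro x
    simp
  rw [h1, ← Finset.sum_compl_add_sum ({s} : Finset V) (fun k => e k j), h2,
    Finset.sum_singleton, hsym s j, add_comm]

theorem mem_of_unstable {v : Conf s} {M : List {i : V // i ≠ s}} (hM : ValidSeq e s v M)
    (hst : Stable e s (applySeq e s v M)) {i : {i : V // i ≠ s}}
    (hdeg : deg e i.1 ≤ v i) : i ∈ M := by
  by_contra h
  have H := applySeq_value e s M v hM i
  rw [List.count_eq_zero.2 h] at H
  simp only [Nat.zero_mul, Nat.add_zero] at H
  have h2 : v i ≤ applySeq e s v M i := by omega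
  exact absurd (hst i) (not_lt.2 (le_trans hdeg h2))

end Core
section Core2

variable {V : Type*} [Fintype V] [DecidableEq V]
variable (e : V → V → ℕ) (s : V)

theorem valid_nodup (hsym : ∀ i j, e i j = e j i) (u : Conf s) (hu : Stable e s u) :
    ∀ (L P : List {i : V // i ≠ s}),
      ValidSeq e s (u + fun j => e j.1 s) (P ++ L) → P.Nodup → (P ++ L).Nodup := by
  intro L
  induction L with
  | nil => intro P h hP; simpa using hP
  | cons a L ih =>
    intro P hV hP
    have haP : a ∉ P := by
      intro ha
      rw [validSeq_append] at hV
      have hdeg : deg e a.1 ≤ applySeq e s (u + fun j => e j.1 s) P a := hV.2.1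
      have hval := applySeq_value e s P _ hV.1 a
      have hc : P.count a = 1 := List.count_eq_one_of_mem hP ha
      have hsum : (P.map fun i => e i.1 a.1).sum ≤ ∑ i : {i : V // i ≠ s}, e i.1 a.1 :=
        aux_sum_le_univ _ P hP
      have hd : deg e a.1 = e a.1 s + ∑ i : {i : V // i ≠ s}, e i.1 a.1 := deg_split e s hsym a.1
      have hw : (u + fun j : {i : V // i ≠ s} => e j.1 s) a = u a + e a.1 s := rfl
      have hua := hu a
      rw [hc, hw] at hval
      omega
    have hP' : (P ++ [a]).Nodup := by
      rw [List.nodup_append]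
      refine ⟨hP, List.nodup_singleton a, ?_⟩
      intro x hx y hxa hxy
      rw [List.mem_singleton] at hxa
      subst hxa
      exact haP (hxy ▸ hx)
    have hV' : ValidSeq e s (u + fun j => e j.1 s) ((P ++ [a]) ++ L) := by
      simpa using hV
    have := ih (P ++ [a]) hV' hP'
    simpa using this

theorem nodup_of_valid (hsym : ∀ i j, e i j = e j i) {u : Conf s} (hu : Stable e s u)
    {L : List {i : V // i ≠ s}} (hL : ValidSeq e s (u + fun j => e j.1 s) L) : L.Nodup := by
  have := valid_nodup e s hsym u hu L [] (by simpa using hL) List.nodup_nil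
  simpa using this

theorem toppleAt_comm {v : Conf s} {i j : {i : V // i ≠ s}} (hij : i ≠ j)
    (hi : deg e i.1 ≤ v i) (hj : deg e j.1 ≤ v j) :
    toppleAt e s i (toppleAt e s j v) = toppleAt e s j (toppleAt e s i v) := by
  funext k
  show toppleAt e s i (toppleAt e s j v) k = toppleAt e s j (toppleAt e s i v) k
  by_cases hki : k = i
  · subst hki
    have h1 : toppleAt e s j v k = v k + e j.1 k.1 := by simp [toppleAt, hij]
    have h2 : toppleAt e s k v k = v k - deg e k.1 + e k.1 k.1 := by simp [toppleAt]
    have h3 : toppleAt e s k (toppleAt e s j v) k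
        = toppleAt e s j v k - deg e k.1 + e k.1 k.1 := by simp [toppleAt]
    have h4 : toppleAt e s j (toppleAt e s k v) k
        = toppleAt e s k v k + e j.1 k.1 := by simp [toppleAt, hij]
    rw [h3, h4, h1, h2]
    omega
  · by_cases hkj : k = j
    · subst hkj
      have h1 : toppleAt e s k v k = v k - deg e k.1 + e k.1 k.1 := by simp [toppleAt]
      have h2 : toppleAt e s i v k = v k + e i.1 k.1 := by simp [toppleAt, Ne.symm hij]
      have h3 : toppleAt e s i (toppleAt e s k v) k
          = toppleAt e s k v k + e i.1 k.1 := by simp [toppleAt, Ne.symm hij]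
      have h4 : toppleAt e s k (toppleAt e s i v) k
          = toppleAt e s i v k - deg e k.1 + e k.1 k.1 := by simp [toppleAt]
      rw [h3, h4, h1, h2]
      omega
    · have h1 : toppleAt e s j v k = v k + e j.1 k.1 := by simp [toppleAt, hkj]
      have h2 : toppleAt e s i v k = v k + e i.1 k.1 := by simp [toppleAt, hki]
      have h3 : toppleAt e s i (toppleAt e s j v) k
          = toppleAt e s j v k + e i.1 k.1 := by simp [toppleAt, hki]
      have h4 : toppleAt e s j (toppleAt e s i v) k
          = toppleAt e s i v k + e j.1 k.1 := by simp [toppleAt, hkj]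
      rw [h3, h4, h1, h2]
      omega

theorem exchange : ∀ (A B : List {i : V // i ≠ s}) (v : Conf s) (i : {i : V // i ≠ s}),
    i ∉ A → deg e i.1 ≤ v i → ValidSeq e s v (A ++ i :: B) →
    ValidSeq e s v (i :: (A ++ B)) ∧
      applySeq e s v (A ++ i :: B) = applySeq e s v (i :: (A ++ B)) := by
  intro A
  induction A with
  | nil => intro B v i _ _ hV; exact ⟨hV, rfl⟩
  | cons j A ih =>
    intro B v i hiA hideg hV
    have hij : i ≠ j := fun h => hiA (h ▸ List.mem_cons_self)
    obtain ⟨hjdeg, hV'⟩ := hV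
    have htj : toppleAt e s j v i = v i + e j.1 i.1 := by simp [toppleAt, hij]
    have hi' : deg e i.1 ≤ toppleAt e s j v i := by omega
    obtain ⟨hV'', happ⟩ := ih B (toppleAt e s j v) i
      (fun h => hiA (List.mem_cons_of_mem j h)) hi' hV'
    obtain ⟨_, hV3⟩ := hV''
    have hcomm := toppleAt_comm e s hij hideg hjdeg
    have hti : toppleAt e s i v j = v j + e i.1 j.1 := by simp [toppleAt, Ne.symm hij]
    have hjdeg' : deg e j.1 ≤ toppleAt e s i v j := by omega
    refine ⟨⟨hideg, hjdeg', ?_⟩, ?_⟩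
    · show ValidSeq e s (toppleAt e s j (toppleAt e s i v)) (A ++ B)
      rw [← hcomm]
      exact hV3
    · show applySeq e s (toppleAt e s j v) (A ++ i :: B) = _
      rw [happ]
      show applySeq e s (toppleAt e s i (toppleAt e s j v)) (A ++ B)
        = applySeq e s (toppleAt e s j (toppleAt e s i v)) (A ++ B)
      rw [hcomm]

theorem confluence : ∀ (n : ℕ) (L : List {i : V // i ≠ s}), L.length ≤ n →
    ∀ (v : Conf s) (M : List {i : V // i ≠ s}),
    ValidSeq e s v L → Stable e s (applySeq e s v L) →
    ValidSeq e s v M → Stable e s (applySeq e s v M) →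
    applySeq e s v L = applySeq e s v M := by
  intro n
  induction n with
  | zero =>
    intro L hL v M hVL hSL hVM hSM
    have hnil : L = [] := List.eq_nil_of_length_eq_zero (Nat.le_zero.1 hL)
    subst hnil
    cases M with
    | nil => rfl
    | cons i M' => exact absurd (hSL i) (not_lt.2 hVM.1)
  | succ n ih =>
    intro L hL v M hVL hSL hVM hSM
    cases L with
    | nil =>
      cases M with
      | nil => rfl
      | cons i M' => exact absurd (hSL i) (not_lt.2 hVM.1)
    | cons i T =>
      obtain ⟨hideg, hVT⟩ := hVL
      have hiM : i ∈ M := mem_of_unstable e s hVM hSM hideg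
      obtain ⟨A, j, B, hsplit, hji, hA⟩ :=
        aux_first_split (fun x => x = i) M ⟨i, hiM, rfl⟩
      subst hji
      have hiA : j ∉ A := fun h => hA j h rfl
      rw [hsplit] at hVM hSM ⊢
      obtain ⟨hV2, happ⟩ := exchange e s A B v j hiA hideg hVM
      rw [happ] at hSM ⊢
      obtain ⟨_, hV3⟩ := hV2
      show applySeq e s (toppleAt e s j v) T = applySeq e s (toppleAt e s j v) (A ++ B)
      exact ih T (by simpa using hL) (toppleAt e s j v) (A ++ B) hVT hSL hV3 hSM

theorem rtg_to_list {v z : Conf s} (h : Relation.ReflTransGen (Topple e s) v z) :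
    ∃ L, ValidSeq e s v L ∧ applySeq e s v L = z := by
  induction h with
  | refl => exact ⟨[], trivial, rfl⟩
  | tail hab hbc ih =>
    obtain ⟨L, hL1, hL2⟩ := ih
    obtain ⟨i, hi, hz⟩ := hbc
    refine ⟨L ++ [i], ?_, ?_⟩
    · rw [validSeq_append]
      refine ⟨hL1, ?_⟩
      rw [hL2]
      exact ⟨hi, trivial⟩
    · rw [applySeq_append, hL2]
      exact hz.symm

end Core2
section Core3

variable {V : Type*} [Fintype V] [DecidableEq V]
variable (e : V → V → ℕ) (s : V)

theorem burn_key {x : Conf s} {L : List {i : V // i ≠ s}} (hL : ValidSeq e s x L)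
    {j : {i : V // i ≠ s}} (hj : j ∈ L) {P₁ P₂ : List {i : V // i ≠ s}}
    (hsplit : L.dedup = P₁ ++ j :: P₂) :
    e j.1 j.1 + (P₂.map fun i => e i.1 j.1).sum ≤ applySeq e s x L j := by
  obtain ⟨L₁, L₂, hLsplit, hjL₂⟩ := aux_last_split L j hj
  subst hLsplit
  obtain ⟨W, hW⟩ := aux_dedup_split L₁ j L₂ hjL₂
  have hnodup := List.nodup_dedup (L₁ ++ j :: L₂)
  have h1 : j ∉ P₁ := by
    rw [hsplit, List.nodup_append] at hnodup
    exact fun h => hnodup.2.2 j h j List.mem_cons_self rfl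
  have h2 : j ∉ W := by
    have hnodup2 := List.nodup_dedup (L₁ ++ j :: L₂)
    rw [hW, List.nodup_append] at hnodup2
    exact fun h => hnodup2.2.2 j h j List.mem_cons_self rfl
  obtain ⟨hPW, hP₂⟩ := aux_split_unique P₁ W (hsplit.symm.trans hW) h1 h2
  rw [validSeq_append] at hL
  obtain ⟨hV₁, hV₂'⟩ := hL
  obtain ⟨hdegj, hV₂⟩ := hV₂'
  have Hval := applySeq_value e s L₂ (toppleAt e s j (applySeq e s x L₁)) hV₂ j
  rw [List.count_eq_zero.2 hjL₂] at Hval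
  have htop : toppleAt e s j (applySeq e s x L₁) j
      = applySeq e s x L₁ j - deg e j.1 + e j.1 j.1 := by simp [toppleAt]
  have hsum : (P₂.map fun i => e i.1 j.1).sum ≤ (L₂.map fun i => e i.1 j.1).sum := by
    rw [hP₂]
    exact aux_dedup_sum_le _ L₂
  rw [applySeq_append]
  show _ ≤ applySeq e s (toppleAt e s j (applySeq e s x L₁)) L₂ j
  omega

theorem valid_of_cond : ∀ (P : List {i : V // i ≠ s}) (c : Conf s), P.Nodup →
    (∀ (P₁ : List {i : V // i ≠ s}) (j : {i : V // i ≠ s}) (P₂ : List {i : V // i ≠ s}),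
      P = P₁ ++ j :: P₂ → deg e j.1 ≤ c j + (P₁.map fun i => e i.1 j.1).sum) →
    ValidSeq e s c P := by
  intro P
  induction P with
  | nil => intro c _ _; trivial
  | cons j P ih =>
    intro c hnd hcond
    have hjP : j ∉ P := (List.nodup_cons.1 hnd).1
    refine ⟨?_, ?_⟩
    · have := hcond [] j P rfl
      simpa using this
    · apply ih (toppleAt e s j c) (List.nodup_cons.1 hnd).2
      intro Q₁ k Q₂ hQ
      have hkj : k ≠ j := by
        intro h
        subst h
        apply hjP
        rw [hQ]
        exact List.mem_append_right _ List.mem_cons_self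
      have hcc := hcond (j :: Q₁) k Q₂ (by rw [hQ]; rfl)
      have htop : toppleAt e s j c k = c k + e j.1 k.1 := by simp [toppleAt, hkj]
      simp only [List.map_cons, List.sum_cons] at hcc
      omega

theorem burn_list (hsym : ∀ i j, e i j = e j i) {x : Conf s} {L : List {i : V // i ≠ s}}
    (hL : ValidSeq e s x L) (hall : ∀ i : {i : V // i ≠ s}, i ∈ L) :
    ValidSeq e s (applySeq e s x L + fun j => e j.1 s) L.dedup ∧
    applySeq e s (applySeq e s x L + fun j => e j.1 s) L.dedup = applySeq e s x L := by
  have hnd : L.dedup.Nodup := List.nodup_dedup L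
  have hallD : ∀ i : {i : V // i ≠ s}, i ∈ L.dedup := fun i => List.mem_dedup.2 (hall i)
  have hvalid : ValidSeq e s (applySeq e s x L + fun j => e j.1 s) L.dedup := by
    apply valid_of_cond e s _ _ hnd
    intro P₁ j P₂ hsplit
    have hkey := burn_key e s hL (hall j) hsplit
    have hU : (L.dedup.map fun i => e i.1 j.1).sum = ∑ i : {i : V // i ≠ s}, e i.1 j.1 :=
      aux_sum_univ _ _ hnd hallD
    rw [hsplit] at hU
    simp only [List.map_append, List.sum_append, List.map_cons, List.sum_cons] at hU
    have hd := deg_split e s hsym j.1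
    have hpi : (applySeq e s x L + fun j : {i : V // i ≠ s} => e j.1 s) j
        = applySeq e s x L j + e j.1 s := rfl
    rw [hpi]
    omega
  refine ⟨hvalid, ?_⟩
  funext j
  have Hval := applySeq_value e s L.dedup _ hvalid j
  have hc1 : L.dedup.count j = 1 := List.count_eq_one_of_mem hnd (hallD j)
  have hU : (L.dedup.map fun i => e i.1 j.1).sum = ∑ i : {i : V // i ≠ s}, e i.1 j.1 :=
    aux_sum_univ _ _ hnd hallD
  have hd := deg_split e s hsym j.1
  rw [hc1, hU] at Hval
  have hpi : (applySeq e s x L + fun j : {i : V // i ≠ s} => e j.1 s) j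
      = applySeq e s x L j + e j.1 s := rfl
  rw [hpi] at Hval
  omega

theorem all_mem_of_cycle (hsym : ∀ i j, e i j = e j i) (hconn : (graph e).Connected)
    {u : Conf s} {L : List {i : V // i ≠ s}}
    (hL : ValidSeq e s (u + fun j => e j.1 s) L)
    (hend : applySeq e s (u + fun j => e j.1 s) L = u) :
    ∀ i : {i : V // i ≠ s}, i ∈ L := by
  have key : ∀ (k c : V) (w : (graph e).Walk k c), c = s →
      ∀ (hk : k ≠ s), (⟨k, hk⟩ : {i : V // i ≠ s}) ∈ L := by
    intro k c w
    induction w with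
    | nil => intro h hk; exact absurd h hk
    | @cons a b c' hadj p ih =>
      intro hc hk
      by_contra hmem
      have Hval := applySeq_value e s L _ hL ⟨a, hk⟩
      rw [List.count_eq_zero.2 hmem, hend] at Hval
      have Hval' : u ⟨a, hk⟩ + 0 * deg e a
          = (u ⟨a, hk⟩ + e a s) + (L.map fun i => e i.1 a).sum := Hval
      have hβ0 : e a s = 0 ∧ (L.map fun i => e i.1 a).sum = 0 := by omega
      have hadj' : a ≠ b ∧ (0 < e a b ∨ 0 < e b a) := by
        have : (SimpleGraph.fromRel fun i j => 0 < e i j).Adj a b := hadj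
        rwa [SimpleGraph.fromRel_adj] at this
      have heab : 0 < e a b := by
        rcases hadj'.2 with h | h
        · exact h
        · rw [hsym]; exact h
      by_cases hb : b = s
      · subst hb
        omega
      · have hbL := ih hc hb
        have hzero : e b a = 0 :=
          List.sum_eq_zero_iff.1 hβ0.2 (e b a) (List.mem_map.2 ⟨⟨b, hb⟩, hbL, rfl⟩)
        have : e a b = 0 := by rw [hsym]; exact hzero
        omega
  intro i
  obtain ⟨w⟩ := hconn.preconnected i.1 s
  exact key i.1 s w rfl i.2

end Core3
section Core4

variable {V : Type*} [Fintype V] [DecidableEq V]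
variable (e : V → V → ℕ) (s : V)

theorem unique_core (hsym : ∀ i j, e i j = e j i) {u y : Conf s}
    (hu : Stable e s u) (hy : Stable e s y)
    {Lu : List {i : V // i ≠ s}} (hLu : ValidSeq e s (u + fun j => e j.1 s) Lu)
    (hLuN : Lu.Nodup) (hLuA : ∀ i : {i : V // i ≠ s}, i ∈ Lu)
    (μ : {i : V // i ≠ s} → ℤ) (M : ℤ) (hM1 : 1 ≤ M) (hMle : ∀ i, μ i ≤ M)
    (hMex : ∃ i, μ i = M)
    (heq : ∀ j : {i : V // i ≠ s}, (y j : ℤ) = (u j : ℤ)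
      + (μ j * (deg e j.1 : ℤ) - ∑ i : {i : V // i ≠ s}, μ i * (e i.1 j.1 : ℤ))) :
    False := by
  classical
  obtain ⟨a, haM⟩ := hMex
  obtain ⟨Q₁, j, Q₂, hsplit, hjA, hQ₁⟩ :=
    aux_first_split (fun i => μ i = M) Lu ⟨a, hLuA a, haM⟩
  have hjQ₁ : j ∉ Q₁ := fun h => hQ₁ j h hjA
  have hQ₁nd : Q₁.Nodup := by
    rw [hsplit, List.nodup_append] at hLuN
    exact hLuN.1
  rw [hsplit, validSeq_append] at hLu
  have hdegj : deg e j.1 ≤ applySeq e s (u + fun j => e j.1 s) Q₁ j := hLu.2.1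
  have Hval := applySeq_value e s Q₁ _ hLu.1 j
  rw [List.count_eq_zero.2 hjQ₁] at Hval
  have Hval' : applySeq e s (u + fun j : {i : V // i ≠ s} => e j.1 s) Q₁ j + 0 * deg e j.1
      = (u j + e j.1 s) + (Q₁.map fun i => e i.1 j.1).sum := Hval
  have hsumle : (Q₁.map fun i => e i.1 j.1).sum
      ≤ ∑ i ∈ Finset.univ.filter (fun i : {i : V // i ≠ s} => ¬ μ i = M), e i.1 j.1 :=
    aux_sum_le_filter _ _ Q₁ hQ₁nd hQ₁
  have hdsp := deg_split e s hsym j.1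
  have hpart : (∑ i ∈ Finset.univ.filter (fun i : {i : V // i ≠ s} => μ i = M), e i.1 j.1)
      + ∑ i ∈ Finset.univ.filter (fun i : {i : V // i ≠ s} => ¬ μ i = M), e i.1 j.1
      = ∑ i : {i : V // i ≠ s}, e i.1 j.1 :=
    Finset.sum_filter_add_sum_filter_not _ _ _
  have hallow : deg e j.1 ≤ u j + e j.1 s
      + ∑ i ∈ Finset.univ.filter (fun i : {i : V // i ≠ s} => ¬ μ i = M), e i.1 j.1 := by
    omega
  set TA : ℤ := ∑ i ∈ Finset.univ.filter (fun i : {i : V // i ≠ s} => μ i = M),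
    (e i.1 j.1 : ℤ) with hTAdef
  set TC : ℤ := ∑ i ∈ Finset.univ.filter (fun i : {i : V // i ≠ s} => ¬ μ i = M),
    (e i.1 j.1 : ℤ) with hTCdef
  have hallowZ : (deg e j.1 : ℤ) ≤ (u j : ℤ) + (e j.1 s : ℤ) + TC := by
    rw [hTCdef]
    exact_mod_cast hallow
  have hpartZ : TA + TC = ∑ i : {i : V // i ≠ s}, (e i.1 j.1 : ℤ) := by
    rw [hTAdef, hTCdef]
    exact_mod_cast hpart
  have hdspZ : (deg e j.1 : ℤ) = (e j.1 s : ℤ) + ∑ i : {i : V // i ≠ s}, (e i.1 j.1 : ℤ) := by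
    exact_mod_cast hdsp
  have hμsum : (∑ i : {i : V // i ≠ s}, μ i * (e i.1 j.1 : ℤ)) ≤ M * TA + (M - 1) * TC := by
    rw [← Finset.sum_filter_add_sum_filter_not Finset.univ (fun i => μ i = M)
      (fun i => μ i * (e i.1 j.1 : ℤ))]
    have h1 : ∑ i ∈ Finset.univ.filter (fun i : {i : V // i ≠ s} => μ i = M),
        μ i * (e i.1 j.1 : ℤ) = M * TA := by
      rw [hTAdef, Finset.mul_sum]
      apply Finset.sum_congr rfl
      intro i hi
      rw [(Finset.mem_filter.1 hi).2]
    have h2 : ∑ i ∈ Finset.univ.filter (fun i : {i : V // i ≠ s} => ¬ μ i = M),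
        μ i * (e i.1 j.1 : ℤ) ≤ (M - 1) * TC := by
      rw [hTCdef, Finset.mul_sum]
      apply Finset.sum_le_sum
      intro i hi
      have h3 : μ i ≠ M := (Finset.mem_filter.1 hi).2
      have h4 : μ i ≤ M - 1 := by
        have := hMle i
        omega
      exact mul_le_mul_of_nonneg_right h4 (by positivity)
    rw [h1]
    exact add_le_add le_rfl h2
  have hyj := heq j
  rw [hjA] at hyj
  have hyst : (y j : ℤ) < (deg e j.1 : ℤ) := by exact_mod_cast hy j
  have hbnn : (0:ℤ) ≤ (e j.1 s : ℤ) := by positivity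
  have hdeq : (deg e j.1 : ℤ) = (e j.1 s : ℤ) + TA + TC := by
    rw [hdspZ, ← hpartZ]
    ring
  have hMd : M * (deg e j.1 : ℤ) = M * (e j.1 s : ℤ) + M * TA + M * TC := by
    rw [hdeq]
    ring
  have hx1 : (M - 1) * TC = M * TC - TC := by ring
  have hx2 : (M - 1) * (e j.1 s : ℤ) = M * (e j.1 s : ℤ) - (e j.1 s : ℤ) := by ring
  have hx3 : 0 ≤ (M - 1) * (e j.1 s : ℤ) := mul_nonneg (by linarith) hbnn
  linarith

theorem eq_of_flow (hsym : ∀ i j, e i j = e j i) {u y : Conf s}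
    (hu : Stable e s u) (hy : Stable e s y)
    {Lu : List {i : V // i ≠ s}} (hLu : ValidSeq e s (u + fun j => e j.1 s) Lu)
    (hLuN : Lu.Nodup) (hLuA : ∀ i : {i : V // i ≠ s}, i ∈ Lu)
    {Ly : List {i : V // i ≠ s}} (hLy : ValidSeq e s (y + fun j => e j.1 s) Ly)
    (hLyN : Ly.Nodup) (hLyA : ∀ i : {i : V // i ≠ s}, i ∈ Ly)
    (μ : {i : V // i ≠ s} → ℤ)
    (heq : ∀ j : {i : V // i ≠ s}, (y j : ℤ) = (u j : ℤ)
      + (μ j * (deg e j.1 : ℤ) - ∑ i : {i : V // i ≠ s}, μ i * (e i.1 j.1 : ℤ))) :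
    y = u := by
  by_cases hne : Nonempty {i : V // i ≠ s}
  · haveI := hne
    obtain ⟨Mi, _, hM⟩ := Finset.exists_max_image Finset.univ μ Finset.univ_nonempty
    by_cases hM1 : 1 ≤ μ Mi
    · exact (unique_core e s hsym hu hy hLu hLuN hLuA μ (μ Mi) hM1
        (fun i => hM i (Finset.mem_univ i)) ⟨Mi, rfl⟩ heq).elim
    · obtain ⟨mi, _, hm⟩ :=
        Finset.exists_max_image Finset.univ (fun i => -μ i) Finset.univ_nonempty
      have heq' : ∀ j : {i : V // i ≠ s}, (u j : ℤ) = (y j : ℤ)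
          + ((-μ) j * (deg e j.1 : ℤ) - ∑ i : {i : V // i ≠ s}, (-μ) i * (e i.1 j.1 : ℤ)) := by
        intro j
        have h1 := heq j
        have h2 : ∑ i : {i : V // i ≠ s}, (-μ) i * (e i.1 j.1 : ℤ)
            = -∑ i : {i : V // i ≠ s}, μ i * (e i.1 j.1 : ℤ) := by
          rw [← Finset.sum_neg_distrib]
          apply Finset.sum_congr rfl
          intro i _
          simp
        rw [h2]
        simp only [Pi.neg_apply]
        linarith
      by_cases hm1 : 1 ≤ -μ mi
      · exact (unique_core e s hsym hy hu hLy hLyN hLyA (-μ) (-μ mi) hm1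
          (fun i => hm i (Finset.mem_univ i)) ⟨mi, rfl⟩ heq').elim
      · have hz : ∀ i, μ i = 0 := by
          intro i
          have h1 := hM i (Finset.mem_univ i)
          have h2 : -μ i ≤ -μ mi := hm i (Finset.mem_univ i)
          omega
        funext j
        have h1 := heq j
        rw [hz j] at h1
        have h2 : ∑ i : {i : V // i ≠ s}, μ i * (e i.1 j.1 : ℤ) = 0 :=
          Finset.sum_eq_zero (fun i _ => by rw [hz i]; ring)
        rw [h2] at h1
        simp only [zero_mul, sub_zero, add_zero] at h1
        exact_mod_cast h1
  · funext j
    exact absurd ⟨j⟩ hne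

end Core4
section Core5

variable {V : Type*} [Fintype V] [DecidableEq V]
variable (e : V → V → ℕ) (s : V)

theorem test_of_recurrent (hsym : ∀ i j, e i j = e j i) {σ : Conf s → Conf s}
    (hσ : IsStabilization e s σ) {u : Conf s} (hrec : Recurrent e s σ u) :
    σ (u + fun j => e j.1 s) = u := by
  obtain ⟨hu, hre⟩ := hrec
  obtain ⟨w, hw⟩ := hre (fun j => deg e j.1)
  obtain ⟨L, hL, hLe⟩ := rtg_to_list e s (hσ ((fun j : {i : V // i ≠ s} => deg e j.1) + w)).2
  rw [hw] at hLe
  have hstab : Stable e s (applySeq e s ((fun j : {i : V // i ≠ s} => deg e j.1) + w) L) := by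
    rw [hLe]
    exact hu
  have hall : ∀ i : {i : V // i ≠ s}, i ∈ L := by
    intro i
    apply mem_of_unstable e s hL hstab
    exact Nat.le_add_right _ _
  obtain ⟨hbv, hbe⟩ := burn_list e s hsym hL hall
  rw [hLe] at hbv hbe
  obtain ⟨Lσ, hLσ, hLσe⟩ := rtg_to_list e s (hσ (u + fun j => e j.1 s)).2
  have h := confluence e s L.dedup.length L.dedup le_rfl _ Lσ hbv
    (by rw [hbe]; exact hu) hLσ (by rw [hLσe]; exact (hσ _).1)
  rw [hbe, hLσe] at h
  exact h.symm

theorem recurrent_of_test (hsym : ∀ i j, e i j = e j i) (hconn : (graph e).Connected)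
    {σ : Conf s → Conf s} (hσ : IsStabilization e s σ) {u : Conf s} (hu : Stable e s u)
    (ht : σ (u + fun j => e j.1 s) = u) : Recurrent e s σ u := by
  refine ⟨hu, fun v => ?_⟩
  obtain ⟨Lc, hLc, hLce⟩ := rtg_to_list e s (hσ (u + fun j => e j.1 s)).2
  rw [ht] at hLce
  have hLcN : Lc.Nodup := nodup_of_valid e s hsym hu hLc
  have hLcA := all_mem_of_cycle e s hsym hconn hLc hLce
  set x₀ : Conf s := fun j => v j + deg e j.1 + deg e j.1 with hx₀
  obtain ⟨L₀, hL₀, hL₀e⟩ := rtg_to_list e s (hσ x₀).2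
  set z₀ : Conf s := applySeq e s x₀ L₀ with hz₀
  have hz₀st : Stable e s z₀ := by
    rw [hL₀e]
    exact (hσ x₀).1
  refine ⟨fun j => (u j + x₀ j) - (z₀ j + v j), ?_⟩
  set x : Conf s := v + fun j => (u j + x₀ j) - (z₀ j + v j) with hx
  have hx0j : ∀ j : {i : V // i ≠ s}, x₀ j = v j + deg e j.1 + deg e j.1 := by
    intro j
    rw [hx₀]
  have hxj : ∀ j : {i : V // i ≠ s}, x j = v j + ((u j + x₀ j) - (z₀ j + v j)) := by
    intro j
    rw [hx]
    rfl
  have hxval : ∀ j : {i : V // i ≠ s}, x j + z₀ j = u j + x₀ j := by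
    intro j
    have h1 := hz₀st j
    have h2 := hxj j
    have h3 := hx0j j
    omega
  have hxbig : ∀ j : {i : V // i ≠ s}, deg e j.1 ≤ x j := by
    intro j
    have h1 := hz₀st j
    have h2 := hxval j
    have h3 := hx0j j
    omega
  obtain ⟨L₁, hL₁, hL₁e⟩ := rtg_to_list e s (hσ x).2
  have hyst : Stable e s (σ x) := (hσ x).1
  have hstab₁ : Stable e s (applySeq e s x L₁) := by
    rw [hL₁e]
    exact hyst
  have hallx : ∀ i : {i : V // i ≠ s}, i ∈ L₁ :=
    fun i => mem_of_unstable e s hL₁ hstab₁ (hxbig i)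
  obtain ⟨hbv, hbe⟩ := burn_list e s hsym hL₁ hallx
  rw [hL₁e] at hbv hbe
  have heq : ∀ j : {i : V // i ≠ s}, ((σ x) j : ℤ) = (u j : ℤ)
      + ((fun i : {i : V // i ≠ s} => (L₀.count i : ℤ) - (L₁.count i : ℤ)) j * (deg e j.1 : ℤ)
        - ∑ i : {i : V // i ≠ s},
            ((L₀.count i : ℤ) - (L₁.count i : ℤ)) * (e i.1 j.1 : ℤ)) := by
    intro j
    have E0 := applySeq_value e s L₀ x₀ hL₀ j
    rw [← hz₀] at E0
    have E1 := applySeq_value e s L₁ x hL₁ j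
    rw [hL₁e] at E1
    rw [aux_sum_count (fun i : {i : V // i ≠ s} => e i.1 j.1) L₀] at E0
    rw [aux_sum_count (fun i : {i : V // i ≠ s} => e i.1 j.1) L₁] at E1
    have E2 := hxval j
    have hb : (instBEqOfDecidableEq : BEq {i : V // i ≠ s}) = Subtype.instBEq := by
      have : ∀ a b : {i : V // i ≠ s}, (@BEq.beq _ instBEqOfDecidableEq a b) = (@BEq.beq _ Subtype.instBEq a b) := by
        intro a b
        rw [Bool.eq_iff_iff, @beq_iff_eq _ instBEqOfDecidableEq, @beq_iff_eq _ Subtype.instBEq]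
      cases h1 : (instBEqOfDecidableEq : BEq {i : V // i ≠ s}); cases h2 : (Subtype.instBEq : BEq {i : V // i ≠ s})
      congr; funext a b; have := this a b; rw [h1, h2] at this; exact this
    have E0' : (z₀ j : ℤ) + (L₀.count j : ℤ) * (deg e j.1 : ℤ)
        = (x₀ j : ℤ) + ∑ i : {i : V // i ≠ s}, (L₀.count i : ℤ) * (e i.1 j.1 : ℤ) := by
      rw [hb] at E0
      exact_mod_cast E0
    have E1' : ((σ x) j : ℤ) + (L₁.count j : ℤ) * (deg e j.1 : ℤ)
        = (x j : ℤ) + ∑ i : {i : V // i ≠ s}, (L₁.count i : ℤ) * (e i.1 j.1 : ℤ) := by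
      rw [hb] at E1
      exact_mod_cast E1
    have E2' : (x j : ℤ) + (z₀ j : ℤ) = (u j : ℤ) + (x₀ j : ℤ) := by exact_mod_cast E2
    have hsplit : ∑ i : {i : V // i ≠ s},
        ((L₀.count i : ℤ) - (L₁.count i : ℤ)) * (e i.1 j.1 : ℤ)
        = (∑ i : {i : V // i ≠ s}, (L₀.count i : ℤ) * (e i.1 j.1 : ℤ))
          - ∑ i : {i : V // i ≠ s}, (L₁.count i : ℤ) * (e i.1 j.1 : ℤ) := by
      rw [← Finset.sum_sub_distrib]
      apply Finset.sum_congr rfl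
      intro i _
      ring
    show ((σ x) j : ℤ) = (u j : ℤ)
      + (((L₀.count j : ℤ) - (L₁.count j : ℤ)) * (deg e j.1 : ℤ)
        - ∑ i : {i : V // i ≠ s}, ((L₀.count i : ℤ) - (L₁.count i : ℤ)) * (e i.1 j.1 : ℤ))
    rw [hsplit, sub_mul]
    linarith
  exact eq_of_flow e s hsym hu hyst hLc hLcN hLcA hbv (List.nodup_dedup L₁)
    (fun i => List.mem_dedup.2 (hallx i)) _ heq

end Core5
theorem stmt_3 (e : V → V → ℕ) (s : V) (hsym : ∀ i j : V, e i j = e j i)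
    (hconn : (graph e).Connected)
    (σ : Conf s → Conf s) (hσ : IsStabilization e s σ)
    (u : Conf s) (hu : Stable e s u) :
    (∀ L : List {i : V // i ≠ s}, ValidSeq e s (u + fun j => e j.1 s) L → L.Nodup) ∧
    (∀ L : List {i : V // i ≠ s}, ValidSeq e s (u + fun j => e j.1 s) L →
      Stable e s (applySeq e s (u + fun j => e j.1 s) L) →
      (Recurrent e s σ u ↔ ∀ i : {i : V // i ≠ s}, i ∈ L)) ∧
    (Recurrent e s σ u ↔ σ (u + fun j => e j.1 s) = u) := by
  refine ⟨fun L hL => nodup_of_valid e s hsym hu hL, ?_, ?_⟩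
  · intro L hL hstab
    constructor
    · intro hrec i
      have ht := test_of_recurrent e s hsym hσ hrec
      obtain ⟨Lσ, hLσ, hLσe⟩ := rtg_to_list e s (hσ (u + fun j => e j.1 s)).2
      rw [ht] at hLσe
      have hLe : applySeq e s (u + fun j => e j.1 s) L = u := by
        have h := confluence e s L.length L le_rfl _ Lσ hL hstab hLσ
          (by rw [hLσe]; exact hu)
        rw [hLσe] at h
        exact h
      exact all_mem_of_cycle e s hsym hconn hL hLe i
    · intro hall
      apply recurrent_of_test e s hsym hconn hσ hu
      have hLN : L.Nodup := nodup_of_valid e s hsym hu hL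
      have hLe : applySeq e s (u + fun j => e j.1 s) L = u := by
        funext j
        have Hval := applySeq_value e s L _ hL j
        have Hval' : applySeq e s (u + fun j : {i : V // i ≠ s} => e j.1 s) L j
            + L.count j * deg e j.1
            = (u j + e j.1 s) + (L.map fun i => e i.1 j.1).sum := Hval
        have hc1 : L.count j = 1 := List.count_eq_one_of_mem hLN (hall j)
        have hU : (L.map fun i => e i.1 j.1).sum = ∑ i : {i : V // i ≠ s}, e i.1 j.1 :=
          aux_sum_univ _ _ hLN hall
        have hd := deg_split e s hsym j.1
        rw [hc1, hU] at Hval'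
        omega
      obtain ⟨Lσ, hLσ, hLσe⟩ := rtg_to_list e s (hσ (u + fun j => e j.1 s)).2
      have h := confluence e s L.length L le_rfl _ Lσ hL hstab hLσ
        (by rw [hLσe]; exact (hσ _).1)
      rw [hLe, hLσe] at h
      exact h.symm
  · exact ⟨fun hrec => test_of_recurrent e s hsym hσ hrec,
      fun ht => recurrent_of_test e s hsym hconn hσ hu ht⟩
end SandpilePaper
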